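/- Let U = {u ∈ ℝ^k : Θu ≥ ζ} with Θ ∈ ℝ^{g×k} and ζ ∈ ℝ^g be convex and compact with 0 ∈ relint(U), let {v^1, …, v^ℓ} be a basis of lin(U), and let h < n. Suppose there exists an AAR solution (D, r) of the uncertain LCP(q, M, T, U) with D_{i,·} = 0 for all i ≤ h. Then there exists b₀ ∈ ℝ such that for every b ≥ b₀ there exist x ∈ {0,1}^n and A, C ∈ ℝ^{g×n} with A, C ≥ 0 and r ≥ 0 such that for all i ∈ {1,…,n} and j ∈ {1,…,ℓ}: r_i ≤ b x_i; 0 ≤ M_{i,·} r + q_i ≤ b(1 − x_i); −b(1 − x_i) ≤ (M_{i,·} D + T_{i,·}) v^j ≤ b(1 − x_i); ζᵀ A_{·,i} + r_i ≥ 0; Θᵀ A_{·,i} = (D_{i,·})ᵀ; ζᵀ C_{·,i} + M_{i,·} r + q_i ≥ 0; and Θᵀ C_{·,i} = (M_{i,·} D + T_{i,·})ᵀ. -/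

import Mathlib

open Matrix Finset
open scoped RealInnerProductSpace

lemma sum_eq_sum_coe {m E : Type*} [Fintype m] [AddCommMonoid E] (s : Finset m) (f : m → E)
    (hf : ∀ i ∉ s, f i = 0) : ∑ i, f i = ∑ i : s, f ↑i := by
  rw [Finset.sum_coe_sort s f]
  exact (Finset.sum_subset s.subset_univ fun x _ hx => hf x hx).symm

lemma cone_caratheodory {E : Type*} [AddCommGroup E] [Module ℝ E]
    {m : Type*} [Fintype m] [DecidableEq m] (w : m → E) (t : Finset m) :
    ∀ y : m → ℝ, (∀ i, 0 ≤ y i) → (∀ i ∉ t, y i = 0) →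
    ∃ (s : Finset m) (c : m → ℝ), LinearIndependent ℝ (fun i : s => w i) ∧
      (∀ i, 0 ≤ c i) ∧ (∀ i ∉ s, c i = 0) ∧ ∑ i, c i • w i = ∑ i, y i • w i := by
  induction t using Finset.strongInduction with
  | _ t ih =>
  intro y hy hsupp
  by_cases hli : LinearIndependent ℝ (fun i : t => w i)
  · exact ⟨t, y, hli, hy, hsupp, rfl⟩
  obtain ⟨g, hg0, i₁, hi₁⟩ := Fintype.not_linearIndependent_iff.mp hli
  set d₀ : m → ℝ := fun i => if h : i ∈ t then g ⟨i, h⟩ else 0 with hd₀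
  have hd₀supp : ∀ i ∉ t, d₀ i = 0 := fun i hi => by simp [hd₀, hi]
  have hd₀sum : ∑ i, d₀ i • w i = 0 := by
    rw [sum_eq_sum_coe t _ (fun i hi => by simp [hd₀, hi])]
    rw [← hg0]
    exact Finset.sum_congr rfl fun i _ => by simp [hd₀, i.2]
  have key : ∃ d : m → ℝ, (∑ i, d i • w i = 0) ∧ (∀ i ∉ t, d i = 0) ∧ ∃ i ∈ t, 0 < d i := by
    rcases lt_trichotomy (d₀ (i₁ : m)) 0 with hneg | hzero | hpos
    · refine ⟨-d₀, by simp [hd₀sum], fun i hi => by simp [hd₀supp i hi], i₁, i₁.2, by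
        simpa using hneg⟩
    · exfalso; apply hi₁; simpa [hd₀, i₁.2] using hzero
    · exact ⟨d₀, hd₀sum, hd₀supp, i₁, i₁.2, hpos⟩
  obtain ⟨d, hdsum, hdsupp, i₂, hi₂t, hi₂pos⟩ := key
  have hTne : (t.filter (fun i => 0 < d i)).Nonempty := ⟨i₂, Finset.mem_filter.mpr ⟨hi₂t, hi₂pos⟩⟩
  obtain ⟨i₀, hi₀T, hmin⟩ := Finset.exists_min_image _ (fun i => y i / d i) hTne
  have hi₀t : i₀ ∈ t := (Finset.mem_filter.mp hi₀T).1
  have hdi₀ : 0 < d i₀ := (Finset.mem_filter.mp hi₀T).2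
  set τ : ℝ := y i₀ / d i₀ with hτ
  have hτ0 : 0 ≤ τ := div_nonneg (hy _) hdi₀.le
  set y' : m → ℝ := fun i => y i - τ * d i with hy'def
  have hy' : ∀ i, 0 ≤ y' i := by
    intro i
    by_cases hiT : i ∈ t.filter (fun i => 0 < d i)
    · have hdi : 0 < d i := (Finset.mem_filter.mp hiT).2
      have h1 : τ * d i ≤ y i := (le_div_iff₀ hdi).mp (hmin i hiT)
      simp only [hy'def]; linarith
    · have hdi : d i ≤ 0 := by
        by_cases hit : i ∈ t
        · by_contra hlt
          exact hiT (Finset.mem_filter.mpr ⟨hit, by linarith [not_le.mp hlt]⟩)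
        · simp [hdsupp i hit]
      have : τ * d i ≤ 0 := mul_nonpos_of_nonneg_of_nonpos hτ0 hdi
      have := hy i
      simp only [hy'def]; linarith
  have hy'supp : ∀ i ∉ t.erase i₀, y' i = 0 := by
    intro i hi
    rcases Decidable.em (i ∈ t) with hit | hit
    · have : i = i₀ := by
        by_contra hne
        exact hi (Finset.mem_erase.mpr ⟨hne, hit⟩)
      subst this
      simp only [hy'def, hτ]
      field_simp
      ring
    · simp [hy'def, hsupp i hit, hdsupp i hit]
  have hsum' : ∑ i, y' i • w i = ∑ i, y i • w i := by
    have : ∀ i : m, y' i • w i = y i • w i - τ • (d i • w i) := by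
      intro i; simp only [hy'def]; rw [sub_smul, mul_smul]
    rw [Finset.sum_congr rfl (fun i _ => this i), Finset.sum_sub_distrib, ← Finset.smul_sum,
      hdsum, smul_zero, sub_zero]
  obtain ⟨s, c, h1, h2, h3, h4⟩ := ih (t.erase i₀) (Finset.erase_ssubset hi₀t) y' hy' hy'supp
  exact ⟨s, c, h1, h2, h3, h4.trans hsum'⟩

lemma isClosed_coneSet {ι : Type*} [Fintype ι] {m : Type*} [Fintype m] [DecidableEq m]
    (w : m → EuclideanSpace ℝ ι) :
    IsClosed {x : EuclideanSpace ℝ ι | ∃ y : m → ℝ, (∀ i, 0 ≤ y i) ∧ ∑ i, y i • w i = x} := by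
  have heq : {x : EuclideanSpace ℝ ι | ∃ y : m → ℝ, (∀ i, 0 ≤ y i) ∧ ∑ i, y i • w i = x}
      = ⋃ s ∈ {s : Finset m | LinearIndependent ℝ (fun i : s => w i)},
        {x | ∃ y : m → ℝ, (∀ i, 0 ≤ y i) ∧ (∀ i ∉ s, y i = 0) ∧ ∑ i, y i • w i = x} := by
    ext x
    simp only [Set.mem_setOf_eq, Set.mem_iUnion]
    constructor
    · rintro ⟨y, hy, rfl⟩
      obtain ⟨s, c, hli, hc, hcs, hsum⟩ := cone_caratheodory w Finset.univ y hy (by simp)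
      exact ⟨s, hli, c, hc, hcs, hsum⟩
    · rintro ⟨s, _, y, hy, _, rfl⟩
      exact ⟨y, hy, rfl⟩
  rw [heq]
  refine Set.Finite.isClosed_biUnion (Set.toFinite _) ?_
  intro s hs
  let Φ : ({ i // i ∈ s } → ℝ) →ₗ[ℝ] EuclideanSpace ℝ ι :=
    { toFun := fun y => ∑ i : s, y i • w ↑i,
      map_add' := by intro a b; simp [add_smul, Finset.sum_add_distrib],
      map_smul' := by intro c a; simp [mul_smul, Finset.smul_sum] }
  have hker : LinearMap.ker Φ = ⊥ := by
    rw [LinearMap.ker_eq_bot']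
    intro y hy0
    exact funext (Fintype.linearIndependent_iff.mp hs y hy0)
  have horth : IsClosed {y : { i // i ∈ s } → ℝ | ∀ i, 0 ≤ y i} := by
    have : {y : { i // i ∈ s } → ℝ | ∀ i, 0 ≤ y i} = ⋂ i, {y | 0 ≤ y i} := by ext; simp [Set.mem_iInter]
    rw [this]
    exact isClosed_iInter fun i => isClosed_le continuous_const (continuous_apply i)
  have himg : {x | ∃ y : m → ℝ, (∀ i, 0 ≤ y i) ∧ (∀ i ∉ s, y i = 0) ∧ ∑ i, y i • w i = x}
      = Φ '' {y : { i // i ∈ s } → ℝ | ∀ i, 0 ≤ y i} := by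
    ext x
    constructor
    · rintro ⟨y, hy, hys, rfl⟩
      refine ⟨fun i => y ↑i, fun i => hy ↑i, ?_⟩
      show ∑ i : s, y ↑i • w ↑i = ∑ i, y i • w i
      exact (sum_eq_sum_coe s (fun i => y i • w i) (fun i hi => by simp [hys i hi])).symm
    · rintro ⟨y, hy, rfl⟩
      refine ⟨fun i => if h : i ∈ s then y ⟨i, h⟩ else 0, fun i => ?_, fun i hi => by simp [hi], ?_⟩
      · by_cases h : i ∈ s <;> simp only [h, dif_pos, dif_neg, not_false_iff, le_refl] <;> first | exact hy _ | rfl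
      · show ∑ i, _ • w i = ∑ i : s, y i • w ↑i
        rw [sum_eq_sum_coe s _ (fun i hi => by simp [hi])]
        exact Finset.sum_congr rfl fun i _ => by simp [i.2]
  rw [himg]
  exact ((Φ.isClosedEmbedding_of_injective hker).isClosedMap _ horth)

lemma mem_cone_of_dual {ι : Type*} [Fintype ι] {m : Type*} [Fintype m] [DecidableEq m]
    (w : m → EuclideanSpace ℝ ι) (b : EuclideanSpace ℝ ι)
    (hsep : ∀ yv : EuclideanSpace ℝ ι, (∀ i, 0 ≤ ⟪w i, yv⟫) → 0 ≤ ⟪yv, b⟫) :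
    ∃ y : m → ℝ, (∀ i, 0 ≤ y i) ∧ ∑ i, y i • w i = b := by
  by_contra hb
  let K : ConvexCone ℝ (EuclideanSpace ℝ ι) :=
    { carrier := {x | ∃ y : m → ℝ, (∀ i, 0 ≤ y i) ∧ ∑ i, y i • w i = x}
      smul_mem' := by
        rintro c hc x ⟨y, hy, rfl⟩
        refine ⟨c • y, fun i => mul_nonneg hc.le (hy i), ?_⟩
        rw [Finset.smul_sum]
        exact Finset.sum_congr rfl fun i _ => (mul_smul c (y i) (w i)).symm ▸ rfl
      add_mem' := by
        rintro x ⟨y1, hy1, rfl⟩ x2 ⟨y2, hy2, rfl⟩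
        exact ⟨y1 + y2, fun i => add_nonneg (hy1 i) (hy2 i),
          by simp [add_smul, Finset.sum_add_distrib]⟩ }
  have hne : (K : Set (EuclideanSpace ℝ ι)).Nonempty := ⟨0, 0, fun i => le_refl 0, by simp⟩
  have hcl : IsClosed (K : Set (EuclideanSpace ℝ ι)) := isClosed_coneSet w
  have hbK : b ∉ K := fun h => hb h
  let P : ProperCone ℝ (EuclideanSpace ℝ ι) :=
    { carrier := (K : Set (EuclideanSpace ℝ ι))
      zero_mem' := ⟨0, fun i => le_refl 0, by simp⟩
      add_mem' := fun ha hb => K.add_mem ha hb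
      smul_mem' := by
        rintro c x ⟨y, hy, rfl⟩
        exact ⟨(c : ℝ) • y, fun i => mul_nonneg c.2 (hy i),
          by simp [Finset.smul_sum, mul_smul, NNReal.smul_def]⟩
      isClosed' := hcl }
  have hbP : b ∉ P := fun h => hb h
  obtain ⟨yv, hyv1, hyv2⟩ := ProperCone.hyperplane_separation' P hbP
  rw [real_inner_comm] at hyv2
  have hwK : ∀ i, w i ∈ K := by
    intro i
    refine ⟨fun j => if j = i then 1 else 0, fun j => by positivity, ?_⟩
    simp [ite_smul]
  exact absurd (hsep yv fun i => hyv1 (w i) (hwK i)) (not_le.mpr hyv2)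

/-- embed a pair (vector, scalar) into Euclidean space on `Option (Fin k)`. -/
noncomputable def toE {k : ℕ} (a : Fin k → ℝ) (t : ℝ) : EuclideanSpace ℝ (Option (Fin k)) :=
  (WithLp.equiv 2 _).symm (fun o => o.elim t a)

lemma toE_apply_some {k : ℕ} (a : Fin k → ℝ) (t : ℝ) (i : Fin k) : toE a t (some i) = a i := rfl
lemma toE_apply_none {k : ℕ} (a : Fin k → ℝ) (t : ℝ) : toE a t none = t := rfl

lemma inner_toE {k : ℕ} (a : Fin k → ℝ) (t : ℝ) (x : EuclideanSpace ℝ (Option (Fin k))) :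
    ⟪toE a t, x⟫ = t * x none + ∑ i, a i * x (some i) := by
  rw [PiLp.inner_apply]
  rw [Fintype.sum_option]
  simp [toE_apply_some, toE_apply_none, RCLike.inner_apply, conj_trivial]
  exact congrArg₂ (· + ·) (mul_comm _ _) (Finset.sum_congr rfl fun i _ => mul_comm _ _)

lemma farkas {g k : ℕ} (Θ : Matrix (Fin g) (Fin k) ℝ) (ζ : Fin g → ℝ) (c : Fin k → ℝ) (β : ℝ)
    (hfeas : ∃ u : Fin k → ℝ, ∀ i, ζ i ≤ Θ.mulVec u i)
    (h : ∀ u : Fin k → ℝ, (∀ i, ζ i ≤ Θ.mulVec u i) → β ≤ c ⬝ᵥ u) :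
    ∃ y : Fin g → ℝ, (∀ i, 0 ≤ y i) ∧ Θᵀ.mulVec y = c ∧ β ≤ ζ ⬝ᵥ y := by
  set ww : Option (Fin g) → EuclideanSpace ℝ (Option (Fin k)) :=
    fun o => o.elim (toE 0 (-1)) (fun i => toE (Θ i) (ζ i)) with hww
  have hmulVec : ∀ (u : Fin k → ℝ) (i : Fin g), Θ.mulVec u i = Θ i ⬝ᵥ u := fun _ _ => rfl
  have hsep : ∀ yv : EuclideanSpace ℝ (Option (Fin k)),
      (∀ o, 0 ≤ ⟪ww o, yv⟫) → 0 ≤ ⟪yv, toE c β⟫ := by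
    intro yv hyv
    set u : Fin k → ℝ := fun i => yv (some i) with hu
    set t : ℝ := yv none with htdef
    have hnone : t ≤ 0 := by
      have := hyv none
      rw [hww] at this
      simp only [Option.elim, inner_toE, toE_apply_none, toE_apply_some, Pi.zero_apply,
        zero_mul, Finset.sum_const_zero, add_zero, neg_mul, one_mul] at this
      linarith
    have hsome : ∀ i, 0 ≤ ζ i * t + Θ i ⬝ᵥ u := by
      intro i
      have := hyv (some i)
      rw [hww] at this
      simp only [Option.elim, inner_toE, toE_apply_none, toE_apply_some] at this
      rw [dotProduct]
      exact le_trans this (le_of_eq (by rw [mul_comm]))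
    have hgoal : ⟪yv, toE c β⟫ = t * β + c ⬝ᵥ u := by
      rw [real_inner_comm, inner_toE, dotProduct, mul_comm]
    rw [hgoal]
    rcases eq_or_lt_of_le hnone with ht | htneg
    · -- t = 0
      have hupos : ∀ i, 0 ≤ Θ i ⬝ᵥ u := fun i => by have := hsome i; rw [ht] at this; linarith
      by_contra hlt
      push_neg at hlt
      have hcu : c ⬝ᵥ u < 0 := by rw [ht] at hlt; linarith
      obtain ⟨u₀, hu₀⟩ := hfeas
      set s : ℝ := max 0 ((β - c ⬝ᵥ u₀) / (c ⬝ᵥ u) + 1) with hs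
      have hs0 : 0 ≤ s := le_max_left _ _
      have hfeas1 : ∀ i, ζ i ≤ Θ.mulVec (u₀ + s • u) i := by
        intro i
        rw [Matrix.mulVec_add, Matrix.mulVec_smul]
        have : 0 ≤ s * Θ.mulVec u i := mul_nonneg hs0 (by rw [hmulVec]; exact hupos i)
        have h2 := hu₀ i
        simp only [Pi.add_apply, Pi.smul_apply, smul_eq_mul]
        linarith
      have h3 := h _ hfeas1
      rw [dotProduct_add, dotProduct_smul] at h3
      have hsgt : (β - c ⬝ᵥ u₀) / (c ⬝ᵥ u) < s := by
        have : (β - c ⬝ᵥ u₀) / (c ⬝ᵥ u) + 1 ≤ s := le_max_right _ _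
        linarith
      have : s * (c ⬝ᵥ u) < β - c ⬝ᵥ u₀ := by
        have := (div_lt_iff_of_neg hcu).mp hsgt
        linarith [this]
      simp only [smul_eq_mul] at h3
      linarith
    · -- t < 0
      have htpos : 0 < -t := by linarith
      set u' : Fin k → ℝ := (-t)⁻¹ • u with hu'
      have hfeas' : ∀ i, ζ i ≤ Θ.mulVec u' i := by
        intro i
        rw [hu', Matrix.mulVec_smul]
        simp only [Pi.smul_apply, smul_eq_mul, hmulVec]
        have h1 := hsome i
        have h2 : ζ i * (-t) ≤ Θ i ⬝ᵥ u := by linarith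
        have hne : (-t) ≠ 0 := ne_of_gt htpos
        have h5 : (-t)⁻¹ * (ζ i * (-t)) ≤ (-t)⁻¹ * (Θ i ⬝ᵥ u) :=
          mul_le_mul_of_nonneg_left h2 (by positivity)
        rw [mul_comm (ζ i) (-t), ← mul_assoc, inv_mul_cancel₀ hne, one_mul] at h5
        exact h5
      have h3 := h u' hfeas'
      have hcu' : c ⬝ᵥ u' = (-t)⁻¹ * (c ⬝ᵥ u) := by
        rw [hu', dotProduct_smul]; rfl
      rw [hcu'] at h3
      have h4 : β * (-t) ≤ c ⬝ᵥ u := by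
        have := mul_le_mul_of_nonneg_left h3 htpos.le
        rw [← mul_assoc] at this
        field_simp at this
        rw [mul_div_cancel_left₀ _ (ne_of_lt htneg)] at this
        linarith [this]
      nlinarith
  obtain ⟨yy, hyy, hsum⟩ := mem_cone_of_dual ww (toE c β) hsep
  have hcoord : ∀ o' : Option (Fin k), ∑ o, yy o * ww o o' = toE c β o' := by
    intro o'
    have h1 := congrFun (congrArg (WithLp.linearEquiv 2 ℝ _) hsum) o'
    rw [map_sum] at h1
    simpa [Finset.sum_apply] using h1
  refine ⟨fun i => yy (some i), fun i => hyy _, ?_, ?_⟩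
  · funext j
    have h1 := hcoord (some j)
    rw [Fintype.sum_option] at h1
    simp only [hww, Option.elim, toE_apply_some, toE_apply_none, Pi.zero_apply, mul_zero,
      zero_add] at h1
    rw [← h1]
    show Θᵀ j ⬝ᵥ _ = _
    rw [dotProduct]
    exact Finset.sum_congr rfl fun i _ => by rw [Matrix.transpose_apply, mul_comm]
  · have h1 := hcoord none
    rw [Fintype.sum_option] at h1
    simp only [hww, Option.elim, toE_apply_some, toE_apply_none, mul_neg, mul_one] at h1
    have h2 : ζ ⬝ᵥ (fun i => yy (some i)) = ∑ i, yy (some i) * ζ i := by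
      rw [dotProduct]; exact Finset.sum_congr rfl fun i _ => mul_comm _ _
    rw [h2]
    have := hyy none
    linarith

lemma exists_pos_smul_mem {k : ℕ} {U : Set (Fin k → ℝ)}
    (h0 : (0 : Fin k → ℝ) ∈ intrinsicInterior ℝ U)
    {w : Fin k → ℝ} (hw : w ∈ Submodule.span ℝ U) : ∃ ε : ℝ, 0 < ε ∧ ε • w ∈ U := by
  have h0U : (0 : Fin k → ℝ) ∈ U := intrinsicInterior_subset h0
  have h0span : (0 : Fin k → ℝ) ∈ affineSpan ℝ U := subset_affineSpan ℝ U h0U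
  have hwdir : w ∈ (affineSpan ℝ U).direction := by
    rw [direction_affineSpan]
    refine Submodule.span_le.mpr (fun u hu => ?_) hw
    simpa using vsub_mem_vectorSpan ℝ hu h0U
  have hmem : ∀ t : ℝ, t • w ∈ affineSpan ℝ U := by
    intro t
    have := AffineSubspace.vadd_mem_of_mem_direction
      (Submodule.smul_mem _ t hwdir) h0span
    simpa using this
  obtain ⟨x₀, hx₀int, hx₀⟩ := mem_intrinsicInterior.mp h0
  set f : ℝ → affineSpan ℝ U := fun t => ⟨t • w, hmem t⟩ with hf
  have hfc : Continuous f := Continuous.subtype_mk (continuous_id.smul continuous_const) _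
  have hf0 : f 0 = x₀ := Subtype.ext (by simp [hf, hx₀])
  have hnb : f ⁻¹' (interior ((↑) ⁻¹' U : Set (affineSpan ℝ U))) ∈ nhds (0 : ℝ) := by
    apply hfc.continuousAt.preimage_mem_nhds
    rw [hf0]
    exact isOpen_interior.mem_nhds hx₀int
  obtain ⟨ε, hε, hball⟩ := Metric.mem_nhds_iff.mp hnb
  refine ⟨ε / 2, by linarith, ?_⟩
  have : f (ε / 2) ∈ interior ((↑) ⁻¹' U : Set (affineSpan ℝ U)) := by
    apply hball
    simp only [Metric.mem_ball, Real.dist_eq, sub_zero]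
    rw [abs_of_pos (by linarith : (0:ℝ) < ε / 2)]
    linarith
  have := interior_subset this
  simpa [hf] using this


/-- `(D, r)` is an affinely adjustable robust (AAR) solution of the uncertain
LCP(q, M, T, U): for every `u ∈ U`, the point `z(u) = Du + r` satisfies
`z(u) ≥ 0`, `M z(u) + q + T u ≥ 0`, and `z(u)ᵀ (M z(u) + q + T u) = 0`. -/
def IsAARSolution {n k : ℕ} (M : Matrix (Fin n) (Fin n) ℝ) (q : Fin n → ℝ)
    (T : Matrix (Fin n) (Fin k) ℝ) (U : Set (Fin k → ℝ))
    (D : Matrix (Fin n) (Fin k) ℝ) (r : Fin n → ℝ) : Prop :=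
  ∀ u ∈ U,
    (∀ i, 0 ≤ (D.mulVec u + r) i) ∧
    (∀ i, 0 ≤ (M.mulVec (D.mulVec u + r) + q + T.mulVec u) i) ∧
    (D.mulVec u + r) ⬝ᵥ (M.mulVec (D.mulVec u + r) + q + T.mulVec u) = 0

theorem aar_solves_milp {n k ℓ g h : ℕ}
    (M : Matrix (Fin n) (Fin n) ℝ) (q : Fin n → ℝ) (T : Matrix (Fin n) (Fin k) ℝ)
    (Θ : Matrix (Fin g) (Fin k) ℝ) (ζ : Fin g → ℝ)
    (U : Set (Fin k → ℝ)) (hU : U = {u : Fin k → ℝ | ∀ i, ζ i ≤ Θ.mulVec u i})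
    (hUconv : Convex ℝ U) (hUcomp : IsCompact U)
    (h0 : (0 : Fin k → ℝ) ∈ intrinsicInterior ℝ U)
    (v : Fin ℓ → (Fin k → ℝ)) (hv_li : LinearIndependent ℝ v)
    (hv_span : Submodule.span ℝ (Set.range v) = Submodule.span ℝ U)
    (hhn : h < n)
    (D : Matrix (Fin n) (Fin k) ℝ) (r : Fin n → ℝ)
    (hAAR : IsAARSolution M q T U D r)
    (hDh : ∀ i : Fin n, (i : ℕ) < h → D i = 0) :
    ∃ b₀ : ℝ, ∀ b : ℝ, b₀ ≤ b →
      ∃ (x : Fin n → ℝ) (A C : Matrix (Fin g) (Fin n) ℝ),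
        (∀ i, x i = 0 ∨ x i = 1) ∧
        (∀ i j, 0 ≤ A i j) ∧ (∀ i j, 0 ≤ C i j) ∧
        (∀ i, 0 ≤ r i) ∧
        (∀ i, r i ≤ b * x i) ∧
        (∀ i, 0 ≤ M.mulVec r i + q i ∧ M.mulVec r i + q i ≤ b * (1 - x i)) ∧
        (∀ i, ∀ j : Fin ℓ,
          -(b * (1 - x i)) ≤ (M * D + T).mulVec (v j) i ∧
            (M * D + T).mulVec (v j) i ≤ b * (1 - x i)) ∧
        (∀ i, 0 ≤ ζ ⬝ᵥ Aᵀ i + r i) ∧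
        (∀ i, Θᵀ.mulVec (Aᵀ i) = D i) ∧
        (∀ i, 0 ≤ ζ ⬝ᵥ Cᵀ i + M.mulVec r i + q i) ∧
        (∀ i, Θᵀ.mulVec (Cᵀ i) = (M * D + T) i) := by
  classical
  have h0U : (0 : Fin k → ℝ) ∈ U := intrinsicInterior_subset h0
  -- expansion of the complementarity function
  have hexp : ∀ (u : Fin k → ℝ) (i : Fin n),
      (M.mulVec (D.mulVec u + r) + q + T.mulVec u) i
        = (M * D + T).mulVec u i + (M.mulVec r i + q i) := by
    intro u i
    rw [Matrix.mulVec_add, Matrix.add_mulVec, ← Matrix.mulVec_mulVec]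
    simp only [Pi.add_apply]
    ring
  -- facts at u = 0
  obtain ⟨hz0, hs0, hc0⟩ := hAAR 0 h0U
  have hr : ∀ i, 0 ≤ r i := by
    intro i; have := hz0 i; simpa using this
  have hs : ∀ i, 0 ≤ M.mulVec r i + q i := by
    intro i; have := hs0 i
    simpa using this
  have hcomp : ∀ i, r i * (M.mulVec r i + q i) = 0 := by
    have h1 : ∀ i ∈ Finset.univ, 0 ≤ (D.mulVec 0 + r) i *
        (M.mulVec (D.mulVec 0 + r) + q + T.mulVec 0) i :=
      fun i _ => mul_nonneg (hz0 i) (hs0 i)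
    have h2 := (Finset.sum_eq_zero_iff_of_nonneg h1).mp hc0
    intro i
    have := h2 i (Finset.mem_univ i)
    simpa using this
  have hszero : ∀ i, 0 < r i → M.mulVec r i + q i = 0 := by
    intro i hri
    have := hcomp i
    rcases mul_eq_zero.mp this with h' | h'
    · exact absurd h' (ne_of_gt hri)
    · exact h'
  -- key vanishing lemma
  have hkey : ∀ i : Fin n, 0 < r i → ∀ w : Fin k → ℝ, w ∈ Submodule.span ℝ U →
      (M * D + T).mulVec w i = 0 := by
    intro i hri w hw
    obtain ⟨ε₀, hε₀, hε₀U⟩ := exists_pos_smul_mem h0 hw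
    set a : ℝ := D i ⬝ᵥ w with ha
    set ε : ℝ := min ε₀ (r i / (2 * (|a| + 1))) with hε
    have habs : 0 ≤ |a| := abs_nonneg a
    have hεpos : 0 < ε := lt_min hε₀ (div_pos hri (by positivity))
    have hεle : ε ≤ r i / (2 * (|a| + 1)) := min_le_right _ _
    have hεb : ε * (2 * (|a| + 1)) ≤ r i := (le_div_iff₀ (by positivity)).mp hεle
    have hεU : ε • w ∈ U := by
      have h01 : ε / ε₀ ≤ 1 := (div_le_one hε₀).mpr (min_le_left _ _)
      have h00 : 0 ≤ ε / ε₀ := by positivity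
      have := hUconv hε₀U h0U h00 (by linarith : (0:ℝ) ≤ 1 - ε / ε₀) (by ring)
      simp only [smul_zero, add_zero, smul_smul] at this
      rwa [div_mul_cancel₀ _ (ne_of_gt hε₀)] at this
    obtain ⟨hz1, hs1, hc1⟩ := hAAR (ε • w) hεU
    have hDv : (D.mulVec (ε • w) + r) i = ε * a + r i := by
      rw [Matrix.mulVec_smul]
      simp only [Pi.add_apply, Pi.smul_apply, smul_eq_mul, ha]
      rfl
    have hzi : 0 < (D.mulVec (ε • w) + r) i := by
      rw [hDv]
      nlinarith [neg_abs_le a, mul_le_mul_of_nonneg_left (neg_abs_le a) hεpos.le]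
    have hterm : (D.mulVec (ε • w) + r) i *
        (M.mulVec (D.mulVec (ε • w) + r) + q + T.mulVec (ε • w)) i = 0 := by
      have h1 : ∀ j ∈ Finset.univ, 0 ≤ (D.mulVec (ε • w) + r) j *
          (M.mulVec (D.mulVec (ε • w) + r) + q + T.mulVec (ε • w)) j :=
        fun j _ => mul_nonneg (hz1 j) (hs1 j)
      exact (Finset.sum_eq_zero_iff_of_nonneg h1).mp hc1 i (Finset.mem_univ i)
    have hsi : (M.mulVec (D.mulVec (ε • w) + r) + q + T.mulVec (ε • w)) i = 0 := by
      rcases mul_eq_zero.mp hterm with h' | h'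
      · exact absurd h' (ne_of_gt hzi)
      · exact h'
    rw [hexp] at hsi
    rw [hszero i hri] at hsi
    have hεw : (M * D + T).mulVec (ε • w) i = ε * (M * D + T).mulVec w i := by
      rw [Matrix.mulVec_smul]; rfl
    rw [hεw, add_zero] at hsi
    exact (mul_eq_zero.mp hsi).resolve_left (ne_of_gt hεpos)
  -- Farkas applications
  have hfeas : ∃ u : Fin k → ℝ, ∀ i, ζ i ≤ Θ.mulVec u i := by
    refine ⟨0, ?_⟩
    rw [hU] at h0U
    exact h0U
  have hAex : ∀ i : Fin n, ∃ y : Fin g → ℝ, (∀ p, 0 ≤ y p) ∧ Θᵀ.mulVec y = D i ∧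
      -(r i) ≤ ζ ⬝ᵥ y := by
    intro i
    apply farkas Θ ζ (D i) (-(r i)) hfeas
    intro u hu
    have huU : u ∈ U := by rw [hU]; exact hu
    have := (hAAR u huU).1 i
    simp only [Pi.add_apply] at this
    have h2 : D.mulVec u i = D i ⬝ᵥ u := rfl
    rw [h2] at this
    linarith
  have hCex : ∀ i : Fin n, ∃ y : Fin g → ℝ, (∀ p, 0 ≤ y p) ∧ Θᵀ.mulVec y = (M * D + T) i ∧
      -(M.mulVec r i + q i) ≤ ζ ⬝ᵥ y := by
    intro i
    apply farkas Θ ζ ((M * D + T) i) (-(M.mulVec r i + q i)) hfeas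
    intro u hu
    have huU : u ∈ U := by rw [hU]; exact hu
    have := (hAAR u huU).2.1 i
    rw [hexp] at this
    have h2 : (M * D + T).mulVec u i = (M * D + T) i ⬝ᵥ u := rfl
    rw [h2] at this
    linarith
  choose yA hyA1 hyA2 hyA3 using hAex
  choose yC hyC1 hyC2 hyC3 using hCex
  -- the bound
  refine ⟨(∑ i, |r i|) + (∑ i, |M.mulVec r i + q i|)
      + ∑ i, ∑ j, |(M * D + T).mulVec (v j) i|, ?_⟩
  intro b hb
  have hS1 : ∀ i, r i ≤ b := by
    intro i
    have h1 : |r i| ≤ ∑ i, |r i| :=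
      Finset.single_le_sum (f := fun i => |r i|) (fun i _ => abs_nonneg _) (Finset.mem_univ i)
    have h2 : (0:ℝ) ≤ ∑ i, |M.mulVec r i + q i| := Finset.sum_nonneg fun i _ => abs_nonneg _
    have h3 : (0:ℝ) ≤ ∑ i, ∑ j, |(M * D + T).mulVec (v j) i| :=
      Finset.sum_nonneg fun i _ => Finset.sum_nonneg fun j _ => abs_nonneg _
    have := le_abs_self (r i)
    linarith
  have hS2 : ∀ i, M.mulVec r i + q i ≤ b := by
    intro i
    have h1 : |M.mulVec r i + q i| ≤ ∑ i, |M.mulVec r i + q i| :=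
      Finset.single_le_sum (f := fun i => |M.mulVec r i + q i|) (fun i _ => abs_nonneg _)
        (Finset.mem_univ i)
    have h2 : (0:ℝ) ≤ ∑ i, |r i| := Finset.sum_nonneg fun i _ => abs_nonneg _
    have h3 : (0:ℝ) ≤ ∑ i, ∑ j, |(M * D + T).mulVec (v j) i| :=
      Finset.sum_nonneg fun i _ => Finset.sum_nonneg fun j _ => abs_nonneg _
    have := le_abs_self (M.mulVec r i + q i)
    linarith
  have hS3 : ∀ (i : Fin n) (j : Fin ℓ), |(M * D + T).mulVec (v j) i| ≤ b := by
    intro i j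
    have h1 : |(M * D + T).mulVec (v j) i| ≤ ∑ j, |(M * D + T).mulVec (v j) i| :=
      Finset.single_le_sum (f := fun j => |(M * D + T).mulVec (v j) i|) (fun j _ => abs_nonneg _)
        (Finset.mem_univ j)
    have h4 : (∑ j, |(M * D + T).mulVec (v j) i|) ≤ ∑ i, ∑ j, |(M * D + T).mulVec (v j) i| :=
      Finset.single_le_sum (f := fun i => ∑ j, |(M * D + T).mulVec (v j) i|)
        (fun i _ => Finset.sum_nonneg fun j _ => abs_nonneg _) (Finset.mem_univ i)
    have h2 : (0:ℝ) ≤ ∑ i, |r i| := Finset.sum_nonneg fun i _ => abs_nonneg _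
    have h3 : (0:ℝ) ≤ ∑ i, |M.mulVec r i + q i| := Finset.sum_nonneg fun i _ => abs_nonneg _
    linarith
  have hb0 : 0 ≤ b := by
    have h2 : (0:ℝ) ≤ ∑ i, |r i| := Finset.sum_nonneg fun i _ => abs_nonneg _
    have h3 : (0:ℝ) ≤ ∑ i, |M.mulVec r i + q i| := Finset.sum_nonneg fun i _ => abs_nonneg _
    have h4 : (0:ℝ) ≤ ∑ i, ∑ j, |(M * D + T).mulVec (v j) i| :=
      Finset.sum_nonneg fun i _ => Finset.sum_nonneg fun j _ => abs_nonneg _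
    linarith
  refine ⟨fun i => if 0 < r i then 1 else 0, (Matrix.of yA)ᵀ, (Matrix.of yC)ᵀ,
    fun i => by by_cases h' : 0 < r i <;> simp [h'], ?_, ?_, hr, ?_, ?_, ?_, ?_, ?_, ?_, ?_⟩
  · intro p i; exact hyA1 i p
  · intro p i; exact hyC1 i p
  · intro i
    by_cases h' : 0 < r i
    · simp only [h', if_pos, mul_one]; exact hS1 i
    · push_neg at h'
      have : r i = 0 := le_antisymm h' (hr i)
      simp [h', this]
  · intro i
    refine ⟨hs i, ?_⟩
    by_cases h' : 0 < r i
    · simp only [h', if_pos]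
      rw [hszero i h']
      simp
    · simp only [h', if_neg, if_false]
      simpa using hS2 i
  · intro i j
    by_cases h' : 0 < r i
    · have hz : (M * D + T).mulVec (v j) i = 0 := by
        apply hkey i h'
        rw [← hv_span]
        exact Submodule.subset_span ⟨j, rfl⟩
      simp [h', hz]
    · simp only [h', if_neg, if_false]
      have := abs_le.mp (hS3 i j)
      constructor <;> [linarith [this.1]; linarith [this.2]]
  · intro i
    have h1 : (Matrix.of yA)ᵀᵀ i = yA i := rfl
    rw [h1]
    linarith [hyA3 i]
  · intro i
    have h1 : (Matrix.of yA)ᵀᵀ i = yA i := rfl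
    rw [h1]
    exact hyA2 i
  · intro i
    have h1 : (Matrix.of yC)ᵀᵀ i = yC i := rfl
    rw [h1]
    linarith [hyC3 i]
  · intro i
    have h1 : (Matrix.of yC)ᵀᵀ i = yC i := rfl
    rw [h1]
    exact hyC2 i
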